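/- Let d ∈ ℕ with d ≥ 2, let L ≥ 1, let X ⊆ ℤ^d, and let f : X → ℝ^d be an L-bilipschitz mapping. Suppose there exists λ ≥ 1 such that every point of ℝ^d lies within Euclidean distance λ of some point of X. Then there exists an injective extension F : ℤ^d → ℝ^d of f such that F is 4λL-Lipschitz and its inverse (defined on F(ℤ^d)) is 96λ²L√d-Lipschitz. -/

import Mathlib

noncomputable section

/-- `f` is `L`-bilipschitz on the set `s`. -/
def IsBilipOn {α β : Type*} [PseudoMetricSpace α] [PseudoMetricSpace β]
    (L : ℝ) (f : α → β) (s : Set α) : Prop :=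
  ∀ x ∈ s, ∀ y ∈ s,
    (1 / L) * dist x y ≤ dist (f x) (f y) ∧ dist (f x) (f y) ≤ L * dist x y

/-- The integer lattice `ℤ^d ⊆ ℝ^d`. -/
def intLat (d : ℕ) : Set (EuclideanSpace ℝ (Fin d)) := {x | ∀ i, ∃ n : ℤ, x i = n}

lemma aux_lat_dist {d : ℕ} {x y : EuclideanSpace ℝ (Fin d)}
    (hx : ∀ i, ∃ n : ℤ, x i = n) (hy : ∀ i, ∃ n : ℤ, y i = n) (hxy : x ≠ y) :
    1 ≤ dist x y := by
  have h : ∃ i, x i ≠ y i := by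
    by_contra h; push_neg at h
    exact hxy (PiLp.ext h)
  obtain ⟨i, hi⟩ := h
  obtain ⟨m, hm⟩ := hx i
  obtain ⟨n, hn⟩ := hy i
  have h1 : (1:ℝ) ≤ dist (x i) (y i) := by
    rw [Real.dist_eq, hm, hn]
    have hmn : m ≠ n := by rintro rfl; exact hi (hm.trans hn.symm)
    have h2 : (1:ℤ) ≤ |m - n| := Int.one_le_abs (sub_ne_zero.mpr hmn)
    calc (1:ℝ) ≤ |((m - n : ℤ) : ℝ)| := by exact_mod_cast h2
    _ = |(m:ℝ) - n| := by push_cast; ring_nf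
  calc (1:ℝ) ≤ dist (x i) (y i) := h1
  _ = Real.sqrt (dist (x i) (y i) ^ 2) := (Real.sqrt_sq dist_nonneg).symm
  _ ≤ Real.sqrt (∑ j, dist (x j) (y j) ^ 2) :=
      Real.sqrt_le_sqrt (Finset.single_le_sum (f := fun j => dist (x j) (y j) ^ 2)
        (fun j _ => sq_nonneg _) (Finset.mem_univ i))
  _ = dist x y := (EuclideanSpace.dist_eq x y).symm

set_option maxHeartbeats 1000000 in
theorem stmt19 (d : ℕ) (hd : 2 ≤ d) (L lam : ℝ) (hL : 1 ≤ L) (hlam : 1 ≤ lam)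
    (X : Set (EuclideanSpace ℝ (Fin d))) (hX : X ⊆ intLat d)
    (f : EuclideanSpace ℝ (Fin d) → EuclideanSpace ℝ (Fin d))
    (hf : IsBilipOn L f X)
    (hnet : ∀ x : EuclideanSpace ℝ (Fin d), ∃ p ∈ X, dist x p ≤ lam) :
    ∃ F : EuclideanSpace ℝ (Fin d) → EuclideanSpace ℝ (Fin d),
      Set.EqOn F f X ∧ Set.InjOn F (intLat d) ∧
      (∀ x ∈ intLat d, ∀ y ∈ intLat d,
        dist (F x) (F y) ≤ 4 * lam * L * dist x y) ∧
      (∀ x ∈ intLat d, ∀ y ∈ intLat d,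
        dist x y ≤ 96 * lam ^ 2 * L * Real.sqrt d * dist (F x) (F y)) := by
  classical
  have hlam0 : (0:ℝ) < lam := lt_of_lt_of_le one_pos hlam
  have hL0 : (0:ℝ) < L := lt_of_lt_of_le one_pos hL
  have hs1 : (1:ℝ) ≤ Real.sqrt d := by
    rw [show (1:ℝ) = Real.sqrt 1 by simp]
    exact Real.sqrt_le_sqrt (by exact_mod_cast le_trans one_le_two hd)
  set C : ℝ := 96 * lam ^ 2 * L * Real.sqrt d with hCdef
  have hC6 : 6 * lam * L ≤ C := by
    have h1 : 96 * lam ^ 2 * L ≤ 96 * lam ^ 2 * L * Real.sqrt d := by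
      nlinarith [mul_le_mul_of_nonneg_left hs1 (by positivity : (0:ℝ) ≤ 96 * lam ^ 2 * L)]
    nlinarith [mul_le_mul_of_nonneg_left hlam (by positivity : (0:ℝ) ≤ lam * L),
      mul_pos hlam0 hL0]
  have hC0 : (0:ℝ) < C := lt_of_lt_of_le (by nlinarith) hC6
  set ε : ℝ := 1 / C with hεdef
  have hε0 : 0 < ε := by positivity
  have hεC : ε * C = 1 := by rw [hεdef]; field_simp
  have hε4 : ε * (4 * lam * L) ≤ 1 := by
    rw [hεdef, div_mul_eq_mul_div, one_mul, div_le_one hC0]; nlinarith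
  have hε12 : ε ≤ 1/2 := by
    have hC2 : (2:ℝ) ≤ C := by nlinarith
    rw [hεdef]
    exact one_div_le_one_div_of_le (by norm_num) hC2 |>.trans (by norm_num)
  -- choose the projection p
  have hex : ∀ z : EuclideanSpace ℝ (Fin d),
      ∃ q, q ∈ X ∧ dist z q ≤ lam ∧ (z ∈ X → q = z) := by
    intro z
    by_cases hz : z ∈ X
    · exact ⟨z, hz, by rw [dist_self]; linarith, fun _ => rfl⟩
    · obtain ⟨q, hq, hdq⟩ := hnet z
      exact ⟨q, hq, hdq, fun h => absurd h hz⟩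
  choose p hpX hpd hpeq using hex
  set F : EuclideanSpace ℝ (Fin d) → EuclideanSpace ℝ (Fin d) :=
    fun z => f (p z) + ε • (z - p z) with hFdef
  have hEq : Set.EqOn F f X := by
    intro z hz
    simp [hFdef, hpeq z hz]
  -- basic distance estimates
  have key_up : ∀ x y, dist (F x) (F y) ≤
      dist (f (p x)) (f (p y)) + ε * dist x (p x) + ε * dist y (p y) := by
    intro x y
    have h1 : dist (F x) (F y) ≤
        dist (f (p x)) (f (p y)) + dist (ε • (x - p x)) (ε • (y - p y)) :=
      dist_add_add_le _ _ _ _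
    have h2 : dist (ε • (x - p x)) (ε • (y - p y)) ≤
        ε * dist x (p x) + ε * dist y (p y) := by
      rw [dist_eq_norm]
      calc ‖ε • (x - p x) - ε • (y - p y)‖
          ≤ ‖ε • (x - p x)‖ + ‖ε • (y - p y)‖ := norm_sub_le _ _
      _ = ε * dist x (p x) + ε * dist y (p y) := by
          rw [norm_smul, norm_smul, Real.norm_eq_abs, abs_of_pos hε0,
            ← dist_eq_norm, ← dist_eq_norm]
    linarith
  have key_low : ∀ x y, dist (f (p x)) (f (p y)) ≤
      dist (F x) (F y) + ε * dist x (p x) + ε * dist y (p y) := by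
    intro x y
    have h1 : dist (F x - ε • (x - p x)) (F y - ε • (y - p y)) ≤
        dist (F x) (F y) + dist (ε • (x - p x)) (ε • (y - p y)) :=
      dist_sub_sub_le _ _ _ _
    have h2 : F x - ε • (x - p x) = f (p x) := by simp [hFdef]
    have h3 : F y - ε • (y - p y) = f (p y) := by simp [hFdef]
    have h4 : dist (ε • (x - p x)) (ε • (y - p y)) ≤
        ε * dist x (p x) + ε * dist y (p y) := by
      rw [dist_eq_norm]
      calc ‖ε • (x - p x) - ε • (y - p y)‖
          ≤ ‖ε • (x - p x)‖ + ‖ε • (y - p y)‖ := norm_sub_le _ _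
      _ = ε * dist x (p x) + ε * dist y (p y) := by
          rw [norm_smul, norm_smul, Real.norm_eq_abs, abs_of_pos hε0,
            ← dist_eq_norm, ← dist_eq_norm]
    rw [h2, h3] at h1
    linarith
  -- the lower Lipschitz bound (implies injectivity)
  have hlow : ∀ x ∈ intLat d, ∀ y ∈ intLat d,
      dist x y ≤ C * dist (F x) (F y) := by
    intro x hx y hy
    by_cases hxy : x = y
    · subst hxy; simp [mul_nonneg hC0.le dist_nonneg]
    by_cases hpp : p x = p y
    · have hFxy : F x - F y = ε • (x - y) := by
        simp only [hFdef, hpp]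
        module
      have : dist (F x) (F y) = ε * dist x y := by
        rw [dist_eq_norm, hFxy, norm_smul, Real.norm_eq_abs, abs_of_pos hε0,
          ← dist_eq_norm]
      rw [this]
      have : C * (ε * dist x y) = dist x y := by
        rw [← mul_assoc, mul_comm C ε, hεC, one_mul]
      rw [this]
    · -- p x ≠ p y
      have hD1 : 1 ≤ dist (p x) (p y) :=
        aux_lat_dist (hX (hpX x)) (hX (hpX y)) hpp
      have hbil := (hf (p x) (hpX x) (p y) (hpX y)).1
      have hkl := key_low x y
      have hdx : dist x (p x) ≤ lam := hpd x
      have hdy : dist y (p y) ≤ lam := hpd y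
      have hdx0 : 0 ≤ dist x (p x) := dist_nonneg
      have hdy0 : 0 ≤ dist y (p y) := dist_nonneg
      have ht0 : 0 ≤ dist (F x) (F y) := dist_nonneg
      -- D ≤ L * t + L*ε*dx + L*ε*dy
      have hD' : dist (p x) (p y) ≤ L * dist (F x) (F y)
          + L * ε * dist x (p x) + L * ε * dist y (p y) := by
        have h5 : (1/L) * dist (p x) (p y) ≤
            dist (F x) (F y) + ε * dist x (p x) + ε * dist y (p y) :=
          le_trans hbil hkl
        have := mul_le_mul_of_nonneg_left h5 hL0.le
        rw [mul_comm L ((1/L) * dist (p x) (p y)), mul_assoc] at this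
        field_simp at this
        nlinarith [this]
      have h2Lt : dist (p x) (p y) ≤ 2 * L * dist (F x) (F y) := by
        nlinarith [mul_le_mul_of_nonneg_left hdx (mul_nonneg hL0.le hε0.le),
          mul_le_mul_of_nonneg_left hdy (mul_nonneg hL0.le hε0.le)]
      have htri : dist x y ≤ dist x (p x) + dist (p x) (p y) + dist y (p y) := by
        calc dist x y ≤ dist x (p x) + dist (p x) y := dist_triangle _ _ _
        _ ≤ dist x (p x) + (dist (p x) (p y) + dist (p y) y) := by
            linarith [dist_triangle (p x) (p y) y]
        _ = dist x (p x) + dist (p x) (p y) + dist y (p y) := by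
            rw [dist_comm (p y) y]; ring
      nlinarith [mul_le_mul_of_nonneg_right hC6 ht0,
        mul_le_mul_of_nonneg_left h2Lt (by linarith : (0:ℝ) ≤ 3 * lam)]
  refine ⟨F, hEq, ?_, ?_, ?_⟩
  · intro x hx y hy hFxy
    have := hlow x hx y hy
    rw [hFxy, dist_self, mul_zero] at this
    exact dist_le_zero.mp this
  · intro x hx y hy
    by_cases hxy : x = y
    · subst hxy; simp [mul_nonneg (mul_nonneg (by linarith : (0:ℝ) ≤ 4*lam) hL0.le) dist_nonneg]
    have h1 : 1 ≤ dist x y := aux_lat_dist hx hy hxy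
    have hbil := (hf (p x) (hpX x) (p y) (hpX y)).2
    have hku := key_up x y
    have hdx : dist x (p x) ≤ lam := hpd x
    have hdy : dist y (p y) ≤ lam := hpd y
    have hdx0 : 0 ≤ dist x (p x) := dist_nonneg
    have hdy0 : 0 ≤ dist y (p y) := dist_nonneg
    have htri : dist (p x) (p y) ≤ dist x (p x) + dist x y + dist y (p y) := by
      calc dist (p x) (p y) ≤ dist (p x) x + dist x (p y) := dist_triangle _ _ _
      _ ≤ dist (p x) x + (dist x y + dist y (p y)) := by
          linarith [dist_triangle x y (p y)]
      _ = dist x (p x) + dist x y + dist y (p y) := by rw [dist_comm (p x) x]; ring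
    have e1 : dist (F x) (F y) ≤ L * dist x (p x) + L * dist x y
        + L * dist y (p y) + ε * dist x (p x) + ε * dist y (p y) := by
      have hmul := mul_le_mul_of_nonneg_left htri hL0.le
      rw [mul_add, mul_add] at hmul
      linarith
    have e2 : L * dist x (p x) ≤ L * lam := mul_le_mul_of_nonneg_left hdx hL0.le
    have e3 : L * dist y (p y) ≤ L * lam := mul_le_mul_of_nonneg_left hdy hL0.le
    have e4 : ε * dist x (p x) ≤ lam / 2 := by
      calc ε * dist x (p x) ≤ (1/2) * lam := by
            exact mul_le_mul hε12 hdx hdx0 (by norm_num)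
      _ = lam / 2 := by ring
    have e5 : ε * dist y (p y) ≤ lam / 2 := by
      calc ε * dist y (p y) ≤ (1/2) * lam := by
            exact mul_le_mul hε12 hdy hdy0 (by norm_num)
      _ = lam / 2 := by ring
    have e6 : L * dist x y + 2 * (L * lam) + lam ≤ 4 * lam * L * dist x y := by
      nlinarith [mul_le_mul_of_nonneg_left h1 (by positivity : (0:ℝ) ≤ 3 * lam * L),
        mul_le_mul_of_nonneg_right hlam (mul_nonneg hL0.le (dist_nonneg (x := x) (y := y))),
        mul_le_mul_of_nonneg_left hL hlam0.le]
    linarith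
  · exact hlow
end
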